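/- Fix an integer d ≥ 1. Let c ≤ c′ be nonnegative integers, let (ε_d, …, ε_1) be the Macaulay expansion of c in base d and let (ε′_d, …, ε′_1) be the Macaulay expansion of c′ in base d. Then all three of the following inequalities hold: Σ_{i=1}^d C(i+ε_i+1, i+1) ≤ Σ_{i=1}^d C(i+ε′_i+1, i+1); Σ_{i=1}^d C(i+ε_i−1, i) ≤ Σ_{i=1}^d C(i+ε′_i−1, i); and Σ_{i=2}^d C(i+ε_i−1, i−1) ≤ Σ_{i=2}^d C(i+ε′_i−1, i−1). In other words, the functions c ↦ c^{⟨d⟩}, c ↦ c_{⟨d⟩} and c ↦ c_{*d} are increasing in c. -/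

import Mathlib

open Finset

lemma hs0 (n : ℕ) : ∀ k, (∑ i ∈ Icc 1 k, (i+n-1).choose i) + 1 ≤ (k+n).choose k := by
  intro k
  induction k with
  | zero => simp
  | succ k ih =>
    rw [Finset.sum_Icc_succ_top (by omega), show k+1+n-1 = k+n by omega,
      show k+1+n = k+n+1 by omega]
    have h2 : (k+n+1).choose (k+1) = (k+n).choose k + (k+n).choose (k+1) :=
      Nat.choose_succ_succ _ _
    omega

lemma hs1 (n : ℕ) : ∀ k, (∑ i ∈ Icc 1 k, (i+n).choose (i+1)) ≤ (k+n+1).choose (k+1) := by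
  intro k
  induction k with
  | zero => simp
  | succ k ih =>
    rw [Finset.sum_Icc_succ_top (by omega), show k+1+n+1 = k+n+1+1 by omega,
      show k+1+n = k+n+1 by omega]
    have h2 : (k+n+1+1).choose (k+1+1) = (k+n+1).choose (k+1) + (k+n+1).choose (k+1+1) :=
      Nat.choose_succ_succ _ _
    omega

lemma hs2 (n : ℕ) (k : ℕ) : (∑ i ∈ Icc 1 k, (i+n-2).choose i) ≤ (k+n-1).choose k := by
  cases n with
  | zero =>
    have h : ∀ i ∈ Icc 1 k, (i+0-2).choose i = 0 := by
      intro i hi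
      simp only [mem_Icc] at hi
      exact Nat.choose_eq_zero_of_lt (by omega)
    rw [Finset.sum_congr rfl h]
    simp
  | succ m =>
    have h1 : ∀ i ∈ Icc 1 k, (i+(m+1)-2).choose i = (i+m-1).choose i := by
      intro i hi; rw [show i+(m+1)-2 = i+m-1 by omega]
    rw [Finset.sum_congr rfl h1, show k+(m+1)-1 = k+m by omega]
    have := hs0 m k
    omega

lemma hs3 (n : ℕ) : ∀ k, (∑ i ∈ Icc 2 k, (i+n-2).choose (i-1)) ≤ (k+n-1).choose (k-1) := by
  intro k
  induction k with
  | zero => simp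
  | succ k ih =>
    rcases Nat.eq_zero_or_pos k with hk | hk
    · subst hk; simp
    rw [Finset.sum_Icc_succ_top (by omega), show k+1+n-2 = k+n-1 by omega,
      show k+1-1 = k by omega, show k+1+n-1 = k+n by omega]
    have h3 : (k+n).choose k = (k+n-1).choose (k-1) + (k+n-1).choose k := by
      have h : (k+n-1+1).choose (k-1+1) = (k+n-1).choose (k-1) + (k+n-1).choose (k-1+1) :=
        Nat.choose_succ_succ _ _
      rw [show k+n-1+1 = k+n by omega, show k-1+1 = k by omega] at h
      exact h
    omega

lemma ioc_split (k d : ℕ) (hkd : k ≤ d) (f : ℕ → ℕ) :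
    ∑ i ∈ Icc 1 d, f i = (∑ i ∈ Icc 1 k, f i) + ∑ i ∈ Ioc k d, f i := by
  have h : ∀ m : ℕ, Finset.Ioc 0 m = Finset.Icc 1 m := by
    intro m; rw [← Finset.Icc_add_one_left_eq_Ioc]; rfl
  rw [← h, ← h, ← Finset.sum_Ioc_consecutive f (Nat.zero_le k) hkd]

lemma value_lt (d k : ℕ) (ε ε' : ℕ → ℤ)
    (hb : ∀ i, 1 ≤ i → i ≤ d → (-1:ℤ) ≤ ε i)
    (hm : ∀ i j, 1 ≤ i → i ≤ j → j ≤ d → ε i ≤ ε j)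
    (hk1 : 1 ≤ k) (hkd : k ≤ d)
    (hlt : ε k < ε' k)
    (htail : ∀ j, k < j → j ≤ d → ε j = ε' j) :
    ∑ i ∈ Icc 1 d, (((i:ℤ) + ε i).toNat).choose i <
    ∑ i ∈ Icc 1 d, (((i:ℤ) + ε' i).toNat).choose i := by
  set n : ℕ := (ε k + 1).toNat with hn
  rw [ioc_split k d hkd, ioc_split k d hkd]
  have htl : ∑ i ∈ Ioc k d, (((i:ℤ) + ε i).toNat).choose i
      = ∑ i ∈ Ioc k d, (((i:ℤ) + ε' i).toNat).choose i := by
    refine Finset.sum_congr rfl fun i hi => ?_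
    simp only [mem_Ioc] at hi
    rw [htail i hi.1 hi.2]
  rw [htl]
  have hA : ∑ i ∈ Icc 1 k, (((i:ℤ) + ε i).toNat).choose i ≤ ∑ i ∈ Icc 1 k, (i+n-1).choose i := by
    refine Finset.sum_le_sum fun i hi => ?_
    simp only [mem_Icc] at hi
    refine Nat.choose_le_choose i ?_
    have h1 := hm i k hi.1 hi.2 hkd
    have h2 := hb k hk1 hkd
    omega
  have hB : (((k:ℤ) + ε' k).toNat).choose k ≤ ∑ i ∈ Icc 1 k, (((i:ℤ) + ε' i).toNat).choose i :=
    Finset.single_le_sum (f := fun i : ℕ => ((i + ε' i : ℤ)).toNat.choose i) (fun i _ => Nat.zero_le _) (Finset.mem_Icc.mpr ⟨hk1, le_refl k⟩)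
  have hkn : (k+n).choose k ≤ (((k:ℤ) + ε' k).toNat).choose k := by
    refine Nat.choose_le_choose k ?_
    have h2 := hb k hk1 hkd
    omega
  have := hs0 n k
  omega

lemma ioc_split2 (k d : ℕ) (hk1 : 1 ≤ k) (hkd : k ≤ d) (f : ℕ → ℕ) :
    ∑ i ∈ Icc 2 d, f i = (∑ i ∈ Icc 2 k, f i) + ∑ i ∈ Ioc k d, f i := by
  have h : ∀ m : ℕ, Finset.Ioc 1 m = Finset.Icc 2 m := fun m => (Finset.Icc_add_one_left_eq_Ioc 1 m).symm
  rw [← h, ← h, ← Finset.sum_Ioc_consecutive f hk1 hkd]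

/-- `ε` (restricted to indices `1,…,d`) is the Macaulay expansion of `c` in base `d`. -/
def IsMacaulayExpansion (c d : ℕ) (ε : ℕ → ℤ) : Prop :=
  (∀ i, 1 ≤ i → i ≤ d → (-1 : ℤ) ≤ ε i) ∧
  (∀ i j, 1 ≤ i → i ≤ j → j ≤ d → ε i ≤ ε j) ∧
  c = ∑ i ∈ Finset.Icc 1 d, (((i : ℤ) + ε i).toNat).choose i

/-- The functions `c ↦ c^⟨d⟩`, `c ↦ c_⟨d⟩` and `c ↦ c_{*d}` defined via the
Macaulay expansion of `c` in base `d` are increasing in `c`. -/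
theorem macaulay_functions_monotone (d : ℕ) (hd : 1 ≤ d) (c c' : ℕ) (hcc : c ≤ c')
    (ε ε' : ℕ → ℤ)
    (hε : IsMacaulayExpansion c d ε) (hε' : IsMacaulayExpansion c' d ε') :
    (∑ i ∈ Finset.Icc 1 d, (((i : ℤ) + ε i + 1).toNat).choose (i + 1) ≤
      ∑ i ∈ Finset.Icc 1 d, (((i : ℤ) + ε' i + 1).toNat).choose (i + 1)) ∧
    (∑ i ∈ Finset.Icc 1 d, (((i : ℤ) + ε i - 1).toNat).choose i ≤
      ∑ i ∈ Finset.Icc 1 d, (((i : ℤ) + ε' i - 1).toNat).choose i) ∧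
    (∑ i ∈ Finset.Icc 2 d, (((i : ℤ) + ε i - 1).toNat).choose (i - 1) ≤
      ∑ i ∈ Finset.Icc 2 d, (((i : ℤ) + ε' i - 1).toNat).choose (i - 1)) := by
  obtain ⟨hb, hm, hc⟩ := hε
  obtain ⟨hb', hm', hc'⟩ := hε'
  by_cases heq : ∀ i ∈ Finset.Icc 1 d, ε i = ε' i
  · refine ⟨le_of_eq ?_, le_of_eq ?_, le_of_eq ?_⟩
    · exact Finset.sum_congr rfl fun i hi => by rw [heq i hi]
    · exact Finset.sum_congr rfl fun i hi => by rw [heq i hi]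
    · refine Finset.sum_congr rfl fun i hi => ?_
      simp only [Finset.mem_Icc] at hi
      rw [heq i (Finset.mem_Icc.mpr ⟨by omega, hi.2⟩)]
  · push_neg at heq
    obtain ⟨i0, hi0, hi0ne⟩ := heq
    set S := (Finset.Icc 1 d).filter (fun i => ε i ≠ ε' i) with hSdef
    have hSne : S.Nonempty := ⟨i0, Finset.mem_filter.mpr ⟨hi0, hi0ne⟩⟩
    set k := S.max' hSne with hkdef
    have hkS : k ∈ S := S.max'_mem hSne
    rw [hSdef, Finset.mem_filter, Finset.mem_Icc] at hkS
    obtain ⟨⟨hk1, hkd⟩, hne⟩ := hkS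
    have htail : ∀ j, k < j → j ≤ d → ε j = ε' j := by
      intro j hj1 hj2
      by_contra hcon
      have hjS : j ∈ S := Finset.mem_filter.mpr ⟨Finset.mem_Icc.mpr ⟨by omega, hj2⟩, hcon⟩
      have := S.le_max' j hjS
      omega
    have hlt : ε k < ε' k := by
      rcases lt_or_gt_of_ne hne with h | h
      · exact h
      · exfalso
        have hv := value_lt d k ε' ε hb' hm' hk1 hkd h (fun j a b => (htail j a b).symm)
        rw [← hc, ← hc'] at hv
        omega
    set n : ℕ := (ε k + 1).toNat with hn
    have hbk := hb k hk1 hkd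
    have hεle : ∀ i, 1 ≤ i → i ≤ k → ε i ≤ ε k := fun i h1 h2 => hm i k h1 h2 hkd
    refine ⟨?_, ?_, ?_⟩
    · rw [ioc_split k d hkd, ioc_split k d hkd]
      have htl : ∑ i ∈ Finset.Ioc k d, (((i : ℤ) + ε i + 1).toNat).choose (i + 1)
          = ∑ i ∈ Finset.Ioc k d, (((i : ℤ) + ε' i + 1).toNat).choose (i + 1) := by
        refine Finset.sum_congr rfl fun i hi => ?_
        simp only [Finset.mem_Ioc] at hi
        rw [htail i hi.1 hi.2]
      rw [htl]
      have hA : ∑ i ∈ Finset.Icc 1 k, (((i : ℤ) + ε i + 1).toNat).choose (i + 1)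
          ≤ ∑ i ∈ Finset.Icc 1 k, (i+n).choose (i+1) := by
        refine Finset.sum_le_sum fun i hi => ?_
        simp only [Finset.mem_Icc] at hi
        refine Nat.choose_le_choose (i+1) ?_
        have := hεle i hi.1 hi.2
        omega
      have hB : (((k:ℤ) + ε' k + 1).toNat).choose (k + 1)
          ≤ ∑ i ∈ Finset.Icc 1 k, (((i : ℤ) + ε' i + 1).toNat).choose (i + 1) :=
        Finset.single_le_sum (f := fun i : ℕ => ((i + ε' i + 1 : ℤ)).toNat.choose (i+1))
          (fun i _ => Nat.zero_le _) (Finset.mem_Icc.mpr ⟨hk1, le_refl k⟩)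
      have hkn : (k+n+1).choose (k+1) ≤ (((k:ℤ) + ε' k + 1).toNat).choose (k + 1) :=
        Nat.choose_le_choose (k+1) (by omega)
      have := hs1 n k
      omega
    · rw [ioc_split k d hkd, ioc_split k d hkd]
      have htl : ∑ i ∈ Finset.Ioc k d, (((i : ℤ) + ε i - 1).toNat).choose i
          = ∑ i ∈ Finset.Ioc k d, (((i : ℤ) + ε' i - 1).toNat).choose i := by
        refine Finset.sum_congr rfl fun i hi => ?_
        simp only [Finset.mem_Ioc] at hi
        rw [htail i hi.1 hi.2]
      rw [htl]
      have hA : ∑ i ∈ Finset.Icc 1 k, (((i : ℤ) + ε i - 1).toNat).choose i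
          ≤ ∑ i ∈ Finset.Icc 1 k, (i+n-2).choose i := by
        refine Finset.sum_le_sum fun i hi => ?_
        simp only [Finset.mem_Icc] at hi
        refine Nat.choose_le_choose i ?_
        have := hεle i hi.1 hi.2
        omega
      have hB : (((k:ℤ) + ε' k - 1).toNat).choose k
          ≤ ∑ i ∈ Finset.Icc 1 k, (((i : ℤ) + ε' i - 1).toNat).choose i :=
        Finset.single_le_sum (f := fun i : ℕ => ((i + ε' i - 1 : ℤ)).toNat.choose i)
          (fun i _ => Nat.zero_le _) (Finset.mem_Icc.mpr ⟨hk1, le_refl k⟩)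
      have hkn : (k+n-1).choose k ≤ (((k:ℤ) + ε' k - 1).toNat).choose k :=
        Nat.choose_le_choose k (by omega)
      have := hs2 n k
      omega
    · rw [ioc_split2 k d hk1 hkd, ioc_split2 k d hk1 hkd]
      have htl : ∑ i ∈ Finset.Ioc k d, (((i : ℤ) + ε i - 1).toNat).choose (i - 1)
          = ∑ i ∈ Finset.Ioc k d, (((i : ℤ) + ε' i - 1).toNat).choose (i - 1) := by
        refine Finset.sum_congr rfl fun i hi => ?_
        simp only [Finset.mem_Ioc] at hi
        rw [htail i hi.1 hi.2]
      rw [htl]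
      by_cases hk2 : 2 ≤ k
      · have hA : ∑ i ∈ Finset.Icc 2 k, (((i : ℤ) + ε i - 1).toNat).choose (i - 1)
            ≤ ∑ i ∈ Finset.Icc 2 k, (i+n-2).choose (i-1) := by
          refine Finset.sum_le_sum fun i hi => ?_
          simp only [Finset.mem_Icc] at hi
          refine Nat.choose_le_choose (i-1) ?_
          have := hεle i (by omega) hi.2
          omega
        have hB : (((k:ℤ) + ε' k - 1).toNat).choose (k - 1)
            ≤ ∑ i ∈ Finset.Icc 2 k, (((i : ℤ) + ε' i - 1).toNat).choose (i - 1) :=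
          Finset.single_le_sum (f := fun i : ℕ => ((i + ε' i - 1 : ℤ)).toNat.choose (i-1))
            (fun i _ => Nat.zero_le _) (Finset.mem_Icc.mpr ⟨hk2, le_refl k⟩)
        have hkn : (k+n-1).choose (k-1) ≤ (((k:ℤ) + ε' k - 1).toNat).choose (k - 1) :=
          Nat.choose_le_choose (k-1) (by omega)
        have := hs3 n k
        omega
      · have hk1' : k = 1 := by omega
        rw [hk1', show Finset.Icc 2 1 = ∅ from Finset.Icc_eq_empty (by omega)]
        simp
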